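/- arXiv:1609.07471 — 6 statements merged into one kernel-verified Lean document; each statement's English description precedes it below -/
import Mathlib

section
/- Let $G$ be a finite tree with at least two edges such that no two leaf edges share a common vertex (i.e., no vertex is adjacent to two leaves via leaf edges). Then there exists a vertex of degree two in $G$ which is adjacent to a leaf. -/
open SimpleGraph Finset

/-- If `v` has degree 1 and is adjacent to `w`, then any neighbor of `v` equals `w`. -/
lemma aux_unique_nbr {V : Type*} [Fintype V] [DecidableEq V] (G : SimpleGraph V)
    [DecidableRel G.Adj] {v w u : V} (hd : G.degree v = 1) (hw : G.Adj v w)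
    (hu : G.Adj v u) : u = w := by
  have hcard : (G.neighborFinset v).card = 1 := hd
  obtain ⟨x, hx⟩ := Finset.card_eq_one.mp hcard
  have h1 : w ∈ G.neighborFinset v := by simpa using hw
  have h2 : u ∈ G.neighborFinset v := by simpa using hu
  rw [hx, Finset.mem_singleton] at h1 h2
  rw [h1, h2]

/-- Walk version: starting in `{v, w}` of a pair of adjacent leaves, one stays there. -/
lemma aux_walk {V : Type*} [Fintype V] [DecidableEq V] (G : SimpleGraph V)
    [DecidableRel G.Adj] {v w : V} (hadj : G.Adj v w)
    (hv : G.degree v = 1) (hw : G.degree w = 1) {x u : V} (p : G.Walk x u) :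
    (x = v ∨ x = w) → u = v ∨ u = w := by
  induction p with
  | nil => exact id
  | cons h q ih =>
    rintro (rfl | rfl)
    · exact ih (Or.inr (aux_unique_nbr G hv hadj h))
    · exact ih (Or.inl (aux_unique_nbr G hw hadj.symm h))

/-- In a connected graph with two adjacent leaves, every vertex is one of them. -/
lemma aux_two_leaves {V : Type*} [Fintype V] [DecidableEq V] (G : SimpleGraph V)
    [DecidableRel G.Adj] (hconn : G.Connected) {v w : V} (hadj : G.Adj v w)
    (hv : G.degree v = 1) (hw : G.degree w = 1) (u : V) : u = v ∨ u = w := by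
  obtain ⟨p⟩ := hconn.preconnected v u
  exact aux_walk G hadj hv hw p (Or.inl rfl)

theorem stmt_0 {V : Type*} [Fintype V] [DecidableEq V] (G : SimpleGraph V)
    [DecidableRel G.Adj] (htree : G.IsTree) (hedges : 2 ≤ G.edgeFinset.card)
    (hleaf : ∀ v w w' : V, G.Adj v w → G.Adj v w' →
      G.degree w = 1 → G.degree w' = 1 → w = w') :
    ∃ v w : V, G.degree v = 2 ∧ G.Adj v w ∧ G.degree w = 1 := by
  by_contra hc
  push_neg at hc
  have hconn := htree.isConnected
  have hcardV : G.edgeFinset.card + 1 = Fintype.card V := htree.card_edgeFinset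
  -- every vertex has positive degree
  have hdegpos : ∀ u : V, 0 < G.degree u := by
    intro u
    rw [G.degree_pos_iff_exists_adj u]
    by_contra h
    push_neg at h
    -- then every edge avoids u, but card V = edges + 1 ≥ 3, connectivity contradiction
    have h3 : 3 ≤ Fintype.card V := by omega
    have : ∃ x : V, x ≠ u := by
      by_contra hx
      push_neg at hx
      have : Fintype.card V ≤ 1 := Fintype.card_le_one_iff.mpr (fun a b => (hx a).trans (hx b).symm)
      omega
    obtain ⟨x, hx⟩ := this
    obtain ⟨p⟩ := hconn.preconnected u x
    cases p with
    | nil => exact hx rfl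
    | cons hadj q => exact h _ hadj
  -- a support of a leaf has degree ≥ 3
  have hsupport : ∀ v w : V, G.Adj v w → G.degree w = 1 → 3 ≤ G.degree v := by
    intro v w hadj hw
    have h1 : 0 < G.degree v := hdegpos v
    have h2 : G.degree v ≠ 2 := fun h => hc v w h hadj hw
    have h3 : G.degree v ≠ 1 := by
      intro hv
      -- then every vertex is v or w, so card V ≤ 2
      have : ∀ u : V, u ∈ ({v, w} : Finset V) := by
        intro u
        rcases aux_two_leaves G hconn hadj hv hw u with h | h <;> simp [h]
      have hle : Fintype.card V ≤ 2 := by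
        calc Fintype.card V = Finset.univ.card := rfl
          _ ≤ ({v, w} : Finset V).card := Finset.card_le_card (fun u _ => this u)
          _ ≤ 2 := Finset.card_insert_le _ _ |>.trans (by simp)
      omega
    omega
  -- leaves and supports
  set L : Finset V := Finset.univ.filter (fun w => G.degree w = 1) with hL
  set S : Finset V := Finset.univ.filter (fun v => 3 ≤ G.degree v ∧ ∃ w, G.Adj v w ∧ G.degree w = 1) with hS
  -- injection from leaves to supports
  have hLS : L.card ≤ S.card := by
    have hne : Nonempty V := hconn.nonempty
    have hex : ∀ w : V, ∃ v, G.degree w = 1 → G.Adj v w := by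
      intro w
      obtain ⟨v, hv⟩ := G.degree_pos_iff_exists_adj w |>.mp (hdegpos w)
      exact ⟨v, fun _ => hv.symm⟩
    choose f hf using hex
    have hf : ∀ w ∈ L, G.Adj (f w) w := fun w hw => hf w (Finset.mem_filter.mp hw).2
    apply Finset.card_le_card_of_injOn f
    · intro w hw
      rw [hS, Finset.mem_coe, Finset.mem_filter]
      have hw1 : G.degree w = 1 := (Finset.mem_filter.mp hw).2
      exact ⟨Finset.mem_univ _, hsupport _ _ (hf w hw) hw1, w, hf w hw, hw1⟩
    · intro w hw w' hw' hff
      have hw1 : G.degree w = 1 := (Finset.mem_filter.mp hw).2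
      have hw1' : G.degree w' = 1 := (Finset.mem_filter.mp hw').2
      exact hleaf (f w) w w' (hf w hw) (hff ▸ hf w' hw') hw1 hw1'
  -- counting: sum of (degree - 2) over all vertices is -2
  have hsum : (∑ v : V, ((G.degree v : ℤ) - 2)) = -2 := by
    have h1 : (∑ v : V, (G.degree v : ℤ)) = 2 * G.edgeFinset.card := by
      rw [← Nat.cast_sum]
      exact_mod_cast congrArg (Nat.cast (R := ℤ)) (G.sum_degrees_eq_twice_card_edges)
    rw [Finset.sum_sub_distrib, h1]
    simp only [Finset.sum_const, Finset.card_univ, nsmul_eq_mul, mul_comm]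
    have : (Fintype.card V : ℤ) = G.edgeFinset.card + 1 := by exact_mod_cast hcardV.symm
    rw [this]; ring
  -- lower bound the sum
  have hdisj : Disjoint L S := by
    rw [Finset.disjoint_left]
    intro a ha hb
    rw [hL, Finset.mem_filter] at ha
    rw [hS, Finset.mem_filter] at hb
    omega
  have hbound : (0 : ℤ) ≤ ∑ v : V, ((G.degree v : ℤ) - 2) := by
    have hsplit : (∑ v : V, ((G.degree v : ℤ) - 2)) =
        (∑ v ∈ L, ((G.degree v : ℤ) - 2)) + (∑ v ∈ Finset.univ \ L, ((G.degree v : ℤ) - 2)) := by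
      rw [← Finset.sum_sdiff (Finset.subset_univ L)]; ring
    rw [hsplit]
    have hLsum : (∑ v ∈ L, ((G.degree v : ℤ) - 2)) = -L.card := by
      have heq : ∀ v ∈ L, ((G.degree v : ℤ) - 2) = -1 := by
        intro v hv
        have := (Finset.mem_filter.mp hv).2
        rw [this]
        norm_num
      rw [Finset.sum_congr rfl heq]
      simp
    have hSsub : S ⊆ Finset.univ \ L := by
      intro v hv
      rw [Finset.mem_sdiff]
      refine ⟨Finset.mem_univ _, ?_⟩
      rw [hL, Finset.mem_filter]
      rw [hS, Finset.mem_filter] at hv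
      rintro ⟨_, h1⟩
      omega
    have hRsum : (S.card : ℤ) ≤ ∑ v ∈ Finset.univ \ L, ((G.degree v : ℤ) - 2) := by
      calc (S.card : ℤ) = ∑ v ∈ S, (1 : ℤ) := by simp
        _ ≤ ∑ v ∈ S, ((G.degree v : ℤ) - 2) := by
            apply Finset.sum_le_sum
            intro v hv
            have := (Finset.mem_filter.mp hv).2.1
            have : (3 : ℤ) ≤ G.degree v := by exact_mod_cast this
            omega
        _ ≤ ∑ v ∈ Finset.univ \ L, ((G.degree v : ℤ) - 2) := by
            apply Finset.sum_le_sum_of_subset_of_nonneg hSsub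
            intro v hv _
            rw [Finset.mem_sdiff, hL, Finset.mem_filter] at hv
            have h1 : G.degree v ≠ 1 := fun h => hv.2 ⟨Finset.mem_univ _, h⟩
            have h2 := hdegpos v
            have : (2 : ℤ) ≤ G.degree v := by exact_mod_cast (by omega : 2 ≤ G.degree v)
            omega
    rw [hLsum]
    have : (L.card : ℤ) ≤ S.card := by exact_mod_cast hLS
    omega
  omega
end

section
/- Let $a, c > 0$ with $a + c = 10/9$, $a < 1$, and $c \le a$. Then $\sin(\pi c)\cos(\pi a) + 2\sin(\pi a)\cos(\pi c) < 0$. -/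
open Real

theorem stmt_3 (a c : ℝ) (ha : 0 < a) (hc : 0 < c) (hsum : a + c = 10 / 9)
    (ha1 : a < 1) (hca : c ≤ a) :
    sin (π * c) * cos (π * a) + 2 * sin (π * a) * cos (π * c) < 0 := by
  have hS : sin (π * (a + c)) = - sin (π / 9) := by
    rw [hsum]
    have h1 : π * (10 / 9) = π + π / 9 := by ring
    rw [h1, Real.sin_add]
    simp
  have hexp : sin (π * (a + c)) = sin (π * a) * cos (π * c) + cos (π * a) * sin (π * c) := by
    rw [mul_add, Real.sin_add]
  have hexp2 : sin (π * (a - c)) = sin (π * a) * cos (π * c) - cos (π * a) * sin (π * c) := by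
    rw [mul_sub, Real.sin_sub]
  have hid : sin (π * c) * cos (π * a) + 2 * sin (π * a) * cos (π * c)
      = (sin (π * (a - c)) - 3 * sin (π / 9)) / 2 := by
    linear_combination -hexp2 / 2 - 3 / 2 * hexp + 3 / 2 * hS
  rw [hid]
  have hle : sin (π * (a - c)) ≤ 1 := Real.sin_le_one _
  have hsin9 : 1 / 3 < sin (π / 9) := by
    have hx1 : (0.3489 : ℝ) < π / 9 := by
      have := Real.pi_gt_d6
      linarith
    have hx2 : π / 9 < 0.35 := by
      have := Real.pi_lt_d2
      linarith
    have hcube : π / 9 - (π / 9) ^ 3 / 4 < sin (π / 9) :=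
      by
        have h6 := Real.sin_gt_sub_cube (x := π / 9) (by positivity)
        have h3 : 0 < (π / 9) ^ 3 := by positivity
        linarith
    have hmono : (0.3489 : ℝ) - (0.35 : ℝ) ^ 3 / 4 ≤ π / 9 - (π / 9) ^ 3 / 4 := by
      have : (π / 9) ^ 3 ≤ (0.35 : ℝ) ^ 3 := by
        apply pow_le_pow_left₀ (by positivity) (le_of_lt hx2)
      linarith
    nlinarith
  linarith
end

section
/- Let $f : [0,L] \to \mathbb{R}$ be continuously differentiable with $f(0) = 0$. Then $\int_0^L f(t)^2\,dt \le \frac{4L^2}{\pi^2}\int_0^L f'(t)^2\,dt$. -/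
open Real MeasureTheory intervalIntegral Set

theorem stmt_8 (L : ℝ) (hL : 0 < L) (f : ℝ → ℝ)
    (hf : ContDiffOn ℝ 1 f (Icc 0 L)) (h0 : f 0 = 0) :
    ∫ t in (0:ℝ)..L, (f t) ^ 2 ≤
      (4 * L ^ 2 / π ^ 2) * ∫ t in (0:ℝ)..L, (derivWithin f (Icc 0 L) t) ^ 2 := by
  have hπ : 0 < π := Real.pi_pos
  set c : ℝ := π / (2 * L) with hc_def
  have hc : 0 < c := by positivity
  have hcL : c * L = π / 2 := by
    rw [hc_def]; field_simp
  set f' : ℝ → ℝ := derivWithin f (Icc 0 L) with hf'def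
  have hU : UniqueDiffOn ℝ (Icc (0:ℝ) L) := uniqueDiffOn_Icc hL
  have hf'cont : ContinuousOn f' (Icc 0 L) := hf.continuousOn_derivWithin hU le_rfl
  have hfc : ContinuousOn f (Icc 0 L) := hf.continuousOn
  have hderiv : ∀ t ∈ Icc (0:ℝ) L, HasDerivWithinAt f (f' t) (Icc 0 L) t := fun t ht =>
    (hf.differentiableOn one_ne_zero t ht).hasDerivWithinAt
  set g : ℝ → ℝ := fun t => f' t ^ 2 - c ^ 2 * f t ^ 2 with hg_def
  have hgcont : ContinuousOn g (Icc 0 L) :=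
    (hf'cont.pow 2).sub (continuousOn_const.mul (hfc.pow 2))
  set Φ : ℝ → ℝ := fun x => ∫ t in (0:ℝ)..x, g t with hΦ_def
  set H : ℝ → ℝ := fun t => c * Real.cos (c * t) * f t ^ 2 / Real.sin (c * t) with hH_def
  -- sin positivity on (0, L]
  have hsinpos : ∀ t : ℝ, 0 < t → t ≤ L → 0 < Real.sin (c * t) := by
    intro t ht htL
    apply Real.sin_pos_of_pos_of_lt_pi (by positivity)
    have : c * t ≤ π / 2 := by
      calc c * t ≤ c * L := by nlinarith
      _ = π / 2 := hcL
    linarith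
  have hH0 : H 0 = 0 := by simp [hH_def, h0]
  have hHL : H L = 0 := by simp [hH_def, hcL]
  -- Continuity of Φ
  have hgintL : IntegrableOn g (Icc 0 L) := hgcont.integrableOn_Icc
  have hΦcont : ContinuousOn Φ (Icc 0 L) := by
    have := intervalIntegral.continuousOn_primitive_interval (a := (0:ℝ)) (b := L)
      (f := g) (μ := volume) (by rwa [uIcc_of_le hL.le])
    rwa [uIcc_of_le hL.le] at this
  -- bound on f
  obtain ⟨M, hM⟩ := isCompact_Icc.exists_bound_of_continuousOn hf'cont
  have hM0 : 0 ≤ M := le_trans (norm_nonneg _) (hM 0 ⟨le_rfl, hL.le⟩)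
  have hfb : ∀ t ∈ Icc (0:ℝ) L, |f t| ≤ M * t := by
    intro t ht
    have h := Convex.norm_image_sub_le_of_norm_hasDerivWithin_le hderiv hM (convex_Icc 0 L)
      (⟨le_rfl, hL.le⟩ : (0:ℝ) ∈ Icc (0:ℝ) L) ht
    rw [h0, sub_zero, sub_zero] at h
    simpa [Real.norm_eq_abs, abs_of_nonneg ht.1] using h
  -- bounds on H
  have hHb : ∀ t ∈ Icc (0:ℝ) L, 0 ≤ H t ∧ H t ≤ π / 2 * M ^ 2 * t := by
    intro t ht
    rcases eq_or_lt_of_le ht.1 with h | h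
    · constructor
      · simp [hH_def, ← h, h0]
      · simp [hH_def, ← h, h0]
    · have hs := hsinpos t h ht.2
      have hctle : c * t ≤ π / 2 := by
        calc c * t ≤ c * L := by nlinarith [ht.2]
        _ = π / 2 := hcL
      have hco : 0 ≤ Real.cos (c * t) :=
        Real.cos_nonneg_of_mem_Icc ⟨by nlinarith, hctle⟩
      have hco1 : Real.cos (c * t) ≤ 1 := Real.cos_le_one _
      have hfb' := hfb t ht
      have hf2 : f t ^ 2 ≤ (M * t) ^ 2 := by
        have := abs_nonneg (f t)
        nlinarith [sq_abs (f t)]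
      have hsge : 2 / π * (c * t) ≤ Real.sin (c * t) :=
        Real.mul_le_sin (by positivity) hctle
      constructor
      · exact div_nonneg (by positivity) hs.le
      · have h1 : H t ≤ c * (M * t) ^ 2 / (2 / π * (c * t)) := by
          apply div_le_div₀ (by positivity) ?_ (by positivity) hsge
          nlinarith [mul_le_mul_of_nonneg_left hf2 hc.le,
            mul_nonneg hc.le (mul_nonneg (sub_nonneg.2 hco1) (sq_nonneg (f t)))]
        calc H t ≤ c * (M * t) ^ 2 / (2 / π * (c * t)) := h1
          _ = π / 2 * M ^ 2 * t := by field_simp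
  -- continuity of H on Icc
  have hHcont : ContinuousOn H (Icc 0 L) := by
    intro t ht
    rcases eq_or_lt_of_le ht.1 with h | h
    · -- t = 0 : squeeze
      rw [ContinuousWithinAt, ← h, hH0]
      have hb : Filter.Tendsto (fun t => π / 2 * M ^ 2 * t) (nhdsWithin 0 (Icc 0 L)) (nhds 0) := by
        have hcont : Continuous fun t : ℝ => π / 2 * M ^ 2 * t := by continuity
        have : Filter.Tendsto (fun t : ℝ => π / 2 * M ^ 2 * t) (nhds 0) (nhds 0) := by
          simpa using hcont.tendsto 0
        exact this.mono_left nhdsWithin_le_nhds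
      apply squeeze_zero' ?_ ?_ hb
      · exact Filter.eventually_of_mem self_mem_nhdsWithin (fun x hx => (hHb x hx).1)
      · exact Filter.eventually_of_mem self_mem_nhdsWithin (fun x hx => (hHb x hx).2)
    · -- t > 0
      have hs := (hsinpos t h ht.2).ne'
      apply ContinuousWithinAt.div
      · exact (continuousWithinAt_const.mul
          ((Real.continuous_cos.comp (continuous_const.mul continuous_id)).continuousWithinAt)).mul
          ((hfc t ht).pow 2)
      · exact (Real.continuous_sin.comp (continuous_const.mul continuous_id)).continuousWithinAt
      · exact hs
  -- derivative facts on the interior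
  have hkey : ∀ t ∈ Ioo (0:ℝ) L, ∃ d : ℝ, HasDerivAt (fun x => Φ x - H x) d t ∧ 0 ≤ d := by
    intro t ht
    have htI : t ∈ Icc (0:ℝ) L := Ioo_subset_Icc_self ht
    have hnb : Icc (0:ℝ) L ∈ nhds t := Icc_mem_nhds ht.1 ht.2
    have hfd : HasDerivAt f (f' t) t := (hderiv t htI).hasDerivAt hnb
    have hΦd : HasDerivAt Φ (g t) t := by
      apply intervalIntegral.integral_hasDerivAt_right
      · exact (hgcont.mono (by rw [uIcc_of_le ht.1.le]; exact Icc_subset_Icc le_rfl ht.2.le)).intervalIntegrable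
      · exact (hgcont.mono Ioo_subset_Icc_self).stronglyMeasurableAtFilter isOpen_Ioo t ht
      · exact hgcont.continuousAt hnb
    set s := Real.sin (c * t) with hs_def
    set co := Real.cos (c * t) with hco_def
    have hs : s ≠ 0 := (hsinpos t ht.1 ht.2.le).ne'
    have hlin : HasDerivAt (fun x : ℝ => c * x) c t := by
      simpa using (hasDerivAt_id t).const_mul c
    have hcosd : HasDerivAt (fun x => Real.cos (c * x)) (-s * c) t :=
      (Real.hasDerivAt_cos (c * t)).comp t hlin
    have hsind : HasDerivAt (fun x => Real.sin (c * x)) (co * c) t :=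
      (Real.hasDerivAt_sin (c * t)).comp t hlin
    have hf2d : HasDerivAt (fun x => f x ^ 2) (2 * f t * f' t) t := by
      simpa [mul_comm, mul_assoc] using hfd.fun_pow 2
    have hnum : HasDerivAt (fun x => c * Real.cos (c * x) * f x ^ 2)
        ((c * (-s * c)) * f t ^ 2 + (c * co) * (2 * f t * f' t)) t :=
      (hcosd.const_mul c).mul hf2d
    have hHd : HasDerivAt H
        ((((c * (-s * c)) * f t ^ 2 + (c * co) * (2 * f t * f' t)) * s
          - (c * co * f t ^ 2) * (co * c)) / s ^ 2) t := hnum.div hsind hs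
    refine ⟨_, hΦd.sub hHd, ?_⟩
    have hid : g t - (((c * (-s * c)) * f t ^ 2 + (c * co) * (2 * f t * f' t)) * s
        - (c * co * f t ^ 2) * (co * c)) / s ^ 2
        = (f' t * s - c * f t * co) ^ 2 / s ^ 2 := by
      field_simp
      ring
    rw [hid]
    positivity
  -- monotonicity
  have hmono : MonotoneOn (fun x => Φ x - H x) (Icc 0 L) := by
    apply monotoneOn_of_deriv_nonneg (convex_Icc 0 L) (hΦcont.sub hHcont)
    · rw [interior_Icc]
      intro t ht
      obtain ⟨d, hd, _⟩ := hkey t ht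
      exact hd.differentiableAt.differentiableWithinAt
    · rw [interior_Icc]
      intro t ht
      obtain ⟨d, hd, hd0⟩ := hkey t ht
      rw [show Φ - H = fun x => Φ x - H x from rfl, hd.deriv]
      exact hd0
  have hΦL : 0 ≤ Φ L := by
    have := hmono (⟨le_rfl, hL.le⟩ : (0:ℝ) ∈ Icc (0:ℝ) L) (⟨hL.le, le_rfl⟩ : L ∈ Icc (0:ℝ) L) hL.le
    have hΦ0 : Φ 0 = 0 := intervalIntegral.integral_same
    simp only [hΦ0, hH0, hHL] at this
    linarith
  -- split the integral
  have hint1 : IntervalIntegrable (fun t => f' t ^ 2) volume 0 L :=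
    ((hf'cont.pow 2).mono (by rw [uIcc_of_le hL.le])).intervalIntegrable
  have hint2 : IntervalIntegrable (fun t => f t ^ 2) volume 0 L :=
    ((hfc.pow 2).mono (by rw [uIcc_of_le hL.le])).intervalIntegrable
  have hsplit : Φ L = (∫ t in (0:ℝ)..L, f' t ^ 2) - c ^ 2 * ∫ t in (0:ℝ)..L, f t ^ 2 := by
    rw [hΦ_def]
    simp only [hg_def]
    rw [intervalIntegral.integral_sub hint1 (hint2.const_mul (c ^ 2)),
      intervalIntegral.integral_const_mul]
  rw [hsplit] at hΦL
  have hfac : 4 * L ^ 2 / π ^ 2 * c ^ 2 = 1 := by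
    rw [hc_def]; field_simp; ring
  have hpos : (0:ℝ) ≤ 4 * L ^ 2 / π ^ 2 := by positivity
  calc (∫ t in (0:ℝ)..L, f t ^ 2)
      = 4 * L ^ 2 / π ^ 2 * (c ^ 2 * ∫ t in (0:ℝ)..L, f t ^ 2) := by
        rw [← mul_assoc, hfac, one_mul]
    _ ≤ 4 * L ^ 2 / π ^ 2 * ∫ t in (0:ℝ)..L, f' t ^ 2 := by
        apply mul_le_mul_of_nonneg_left (by linarith) hpos
end

section
/- Let $f : [0,L] \to \mathbb{R}$ be continuously differentiable with $f(0) = f(L) = 0$. Then $\int_0^L f(t)^2\,dt \le \frac{L^2}{\pi^2}\int_0^L f'(t)^2\,dt$. -/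
open Real MeasureTheory intervalIntegral Set

lemma aux_sq (S K v w cc : ℝ) (hS : S ≠ 0) (hpy : S^2 + K^2 = 1) :
    w^2 - cc^2*v^2 - (2*v*w*cc*(K/S) - v^2*cc^2/S^2) = (w - cc*v*(K/S))^2 := by
  field_simp
  linear_combination (-(cc^2*v^2)) * hpy

theorem stmt_9 (L : ℝ) (hL : 0 < L) (f : ℝ → ℝ)
    (hf : ContDiffOn ℝ 1 f (Icc 0 L)) (h0 : f 0 = 0) (hL0 : f L = 0) :
    ∫ t in (0:ℝ)..L, (f t) ^ 2 ≤
      (L ^ 2 / π ^ 2) * ∫ t in (0:ℝ)..L, (derivWithin f (Icc 0 L) t) ^ 2 := by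
  obtain ⟨c, hcpos, hcL⟩ : ∃ c : ℝ, 0 < c ∧ c * L = π :=
    ⟨π / L, div_pos pi_pos hL, div_mul_cancel₀ π hL.ne'⟩
  set f' := derivWithin f (Icc 0 L) with hf'
  have hfc : ContinuousOn f (Icc 0 L) := hf.continuousOn
  have hf'c : ContinuousOn f' (Icc 0 L) :=
    hf.continuousOn_derivWithin (uniqueDiffOn_Icc hL) le_rfl
  have hdiff : ∀ x ∈ Icc (0:ℝ) L, HasDerivWithinAt f (f' x) (Icc 0 L) x := fun x hx =>
    ((hf.differentiableOn one_ne_zero) x hx).hasDerivWithinAt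
  obtain ⟨M, hM⟩ : ∃ M, ∀ x ∈ Icc (0:ℝ) L, ‖f' x‖ ≤ M :=
    (isCompact_Icc).exists_bound_of_continuousOn hf'c
  have hM0 : 0 ≤ M := le_trans (norm_nonneg _) (hM 0 ⟨le_rfl, hL.le⟩)
  have hlip : ∀ x ∈ Icc (0:ℝ) L, ∀ y ∈ Icc (0:ℝ) L, ‖f y - f x‖ ≤ M * ‖y - x‖ :=
    fun x hx y hy =>
      (convex_Icc 0 L).norm_image_sub_le_of_norm_hasDerivWithin_le hdiff hM hx hy
  have hD : ∀ t ∈ Ioo (0:ℝ) L, HasDerivAt f (f' t) t := fun t ht =>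
    (hdiff t (Ioo_subset_Icc_self ht)).hasDerivAt (Icc_mem_nhds ht.1 ht.2)
  have hsinpos : ∀ t ∈ Ioo (0:ℝ) L, 0 < sin (c * t) := by
    intro t ht
    apply Real.sin_pos_of_pos_of_lt_pi (mul_pos hcpos ht.1)
    calc c * t < c * L := mul_lt_mul_of_pos_left ht.2 hcpos
    _ = π := hcL
  set g : ℝ → ℝ := fun t => f' t ^ 2 - c ^ 2 * f t ^ 2 with hg
  set F : ℝ → ℝ := fun t => f t ^ 2 * c * (cos (c * t) / sin (c * t)) with hF
  set G : ℝ → ℝ := fun t =>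
    2 * f t * f' t * c * (cos (c * t) / sin (c * t)) - f t ^ 2 * c ^ 2 / sin (c * t) ^ 2
    with hG
  have hFG : ∀ t ∈ Ioo (0:ℝ) L, HasDerivAt F (G t) t := by
    intro t ht
    have hs := hsinpos t ht
    have h1 : HasDerivAt (fun x : ℝ => c * x) c t := by
      simpa using (hasDerivAt_id t).const_mul c
    have hcos : HasDerivAt (fun x : ℝ => cos (c * x)) (-sin (c * t) * c) t :=
      (Real.hasDerivAt_cos (c * t)).comp t h1
    have hsin : HasDerivAt (fun x : ℝ => sin (c * x)) (cos (c * t) * c) t :=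
      (Real.hasDerivAt_sin (c * t)).comp t h1
    have hquot := hcos.div hsin hs.ne'
    have hf2 : HasDerivAt (fun x : ℝ => f x ^ 2 * c) (2 * f t * f' t * c) t := by
      have := ((hD t ht).pow 2).mul_const c
      simpa [mul_comm, mul_assoc, mul_left_comm] using this
    have hprod := hf2.mul hquot
    have hnum : -sin (c * t) * c * sin (c * t) - cos (c * t) * (cos (c * t) * c) = -c := by
      linear_combination (-c) * sin_sq_add_cos_sq (c * t)
    refine hprod.congr_deriv ?_
    rw [hnum]
    simp only [hG, Pi.div_apply]
    have hs2 : sin (c * t) ≠ 0 := hs.ne'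
    field_simp
    ring
  have hGcont : ∀ s : Set ℝ, s ⊆ Ioo 0 L → ContinuousOn G s := by
    intro s hs
    have hsub : s ⊆ Icc 0 L := hs.trans Ioo_subset_Icc_self
    have hfs : ContinuousOn f s := hfc.mono hsub
    have hf's : ContinuousOn f' s := hf'c.mono hsub
    have hcoss : ContinuousOn (fun t => cos (c * t)) s :=
      (Real.continuous_cos.comp (continuous_const.mul continuous_id)).continuousOn
    have hsins : ContinuousOn (fun t => sin (c * t)) s :=
      (Real.continuous_sin.comp (continuous_const.mul continuous_id)).continuousOn
    have hsne : ∀ t ∈ s, sin (c * t) ≠ 0 := fun t ht => (hsinpos t (hs ht)).ne'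
    apply ContinuousOn.sub
    · exact (((continuousOn_const.mul hfs).mul hf's).mul continuousOn_const).mul
        (hcoss.div hsins hsne)
    · exact ((hfs.pow 2).mul continuousOn_const).div (hsins.pow 2)
        (fun t ht => pow_ne_zero 2 (hsne t ht))
  have hgcont : ContinuousOn g (Icc 0 L) :=
    (hf'c.pow 2).sub (continuousOn_const.mul (hfc.pow 2))
  obtain ⟨C, hC⟩ : ∃ C, ∀ x ∈ Icc (0:ℝ) L, ‖g x‖ ≤ C :=
    (isCompact_Icc).exists_bound_of_continuousOn hgcont
  have hC0 : 0 ≤ C := le_trans (norm_nonneg _) (hC 0 ⟨le_rfl, hL.le⟩)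
  have hgint : ∀ a b : ℝ, a ∈ Icc (0:ℝ) L → b ∈ Icc (0:ℝ) L →
      IntervalIntegrable g volume a b := by
    intro a b ha hb
    exact (hgcont.mono (uIcc_subset_Icc ha hb)).intervalIntegrable
  have key : ∀ ε : ℝ, 0 < ε → ε < L / 2 →
      -(2 * M ^ 2 * ε) - 2 * C * ε ≤ ∫ t in (0:ℝ)..L, g t := by
    intro ε hε hε2
    set a := ε with hadef
    set b := L - ε with hbdef
    have hab : a ≤ b := by simp only [hadef, hbdef]; linarith
    have haI : a ∈ Icc (0:ℝ) L := ⟨hε.le, by linarith⟩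
    have hbI : b ∈ Icc (0:ℝ) L := ⟨by simp only [hbdef]; linarith,
      by simp only [hbdef]; linarith⟩
    have hsubIoo : Icc a b ⊆ Ioo 0 L := fun t ht => ⟨lt_of_lt_of_le hε ht.1,
      lt_of_le_of_lt ht.2 (by simp only [hbdef]; linarith)⟩
    have huIcc : uIcc a b = Icc a b := uIcc_of_le hab
    have hGint : IntervalIntegrable G volume a b := by
      apply ContinuousOn.intervalIntegrable
      rw [huIcc]; exact hGcont _ hsubIoo
    have hFTC : ∫ t in a..b, G t = F b - F a :=
      integral_eq_sub_of_hasDerivAt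
        (fun t ht => hFG t (hsubIoo (huIcc ▸ ht))) hGint
    have hgab : IntervalIntegrable g volume a b := hgint a b haI hbI
    have hmid : F b - F a ≤ ∫ t in a..b, g t := by
      rw [← hFTC]
      have h1 : 0 ≤ ∫ t in a..b, (g t - G t) := by
        apply intervalIntegral.integral_nonneg hab
        intro u hu
        have hsu := hsinpos u (hsubIoo hu)
        have hsu2 : sin (c * u) ≠ 0 := hsu.ne'
        have heq : g u - G u = (f' u - c * f u * (cos (c * u) / sin (c * u))) ^ 2 := by
          simp only [hg, hG]
          exact aux_sq _ _ _ _ _ hsu2 (sin_sq_add_cos_sq (c * u))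
        rw [heq]; positivity
      have h2 : ∫ t in a..b, (g t - G t) = (∫ t in a..b, g t) - ∫ t in a..b, G t :=
        intervalIntegral.integral_sub hgab hGint
      linarith [h1, h2]
    have hca : 0 < c * a := mul_pos hcpos hε
    have hca2 : c * a < π / 2 := by
      calc c * a < c * (L / 2) := mul_lt_mul_of_pos_left hε2 hcpos
      _ = π / 2 := by rw [← hcL]; ring
    have hcosa : 0 < cos (c * a) := Real.cos_pos_of_mem_Ioo ⟨by linarith [pi_pos], hca2⟩
    have hsina : 0 < sin (c * a) := hsinpos a (hsubIoo ⟨le_rfl, hab⟩)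
    have htan : c * a * cos (c * a) < sin (c * a) := by
      have h := Real.lt_tan hca hca2
      rw [Real.tan_eq_sin_div_cos] at h
      exact (lt_div_iff₀ hcosa).1 h
    have hcot : cos (c * a) / sin (c * a) * (c * a) ≤ 1 := by
      rw [div_mul_eq_mul_div, div_le_one hsina]
      nlinarith [htan]
    have hcotnn : 0 ≤ cos (c * a) / sin (c * a) := le_of_lt (div_pos hcosa hsina)
    have hbound : ∀ v : ℝ, v ^ 2 ≤ M ^ 2 * ε ^ 2 →
        v ^ 2 * c * (cos (c * a) / sin (c * a)) ≤ M ^ 2 * ε := by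
      intro v hv
      have h1 : v ^ 2 * c * (cos (c * a) / sin (c * a)) * (c * ε)
          ≤ M ^ 2 * ε * (c * ε) := by
        calc v ^ 2 * c * (cos (c * a) / sin (c * a)) * (c * ε)
            = (v ^ 2 * c) * (cos (c * a) / sin (c * a) * (c * a)) := by
              simp only [hadef]; ring
        _ ≤ (v ^ 2 * c) * 1 := by
              apply mul_le_mul_of_nonneg_left hcot (by positivity)
        _ = v ^ 2 * c := mul_one _
        _ ≤ M ^ 2 * ε ^ 2 * c := mul_le_mul_of_nonneg_right hv hcpos.le
        _ = M ^ 2 * ε * (c * ε) := by ring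
      exact le_of_mul_le_mul_right h1 (mul_pos hcpos hε)
    have hfa : f a ^ 2 ≤ M ^ 2 * ε ^ 2 := by
      have h := hlip 0 ⟨le_rfl, hL.le⟩ a haI
      rw [h0, sub_zero] at h
      have h2 : |f a| ≤ M * ε := by
        simpa [hadef, Real.norm_eq_abs, abs_of_pos hε, abs_of_pos (show (0:ℝ) < ε from hε)] using h
      nlinarith [abs_nonneg (f a), sq_abs (f a)]
    have hfb : f b ^ 2 ≤ M ^ 2 * ε ^ 2 := by
      have h := hlip L ⟨hL.le, le_rfl⟩ b hbI
      rw [hL0, sub_zero] at h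
      have h2 : |f b| ≤ M * ε := by
        have hnb : ‖b - L‖ = ε := by
          simp only [hbdef, Real.norm_eq_abs]
          rw [abs_of_nonpos (by linarith)]; ring
        rw [hnb] at h
        simpa [Real.norm_eq_abs] using h
      nlinarith [abs_nonneg (f b), sq_abs (f b)]
    have hFa : F a ≤ M ^ 2 * ε := hbound (f a) hfa
    have hcb : c * b = π - c * a := by
      simp only [hbdef, hadef]
      rw [← hcL]; ring
    have hFb : -(M ^ 2 * ε) ≤ F b := by
      have e : F b = -(f b ^ 2 * c * (cos (c * a) / sin (c * a))) := by
        simp only [hF, hcb, Real.cos_pi_sub, Real.sin_pi_sub]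
        ring
      rw [e]
      have := hbound (f b) hfb
      linarith
    have hsplit : ∫ t in (0:ℝ)..L, g t
        = ((∫ t in (0:ℝ)..a, g t) + ∫ t in a..b, g t) + ∫ t in b..L, g t := by
      rw [integral_add_adjacent_intervals (hgint 0 a ⟨le_rfl, hL.le⟩ haI) (hgint a b haI hbI),
        integral_add_adjacent_intervals (hgint 0 b ⟨le_rfl, hL.le⟩ hbI)
          (hgint b L hbI ⟨hL.le, le_rfl⟩)]
    have hb1 : |∫ t in (0:ℝ)..a, g t| ≤ C * ε := by
      have h := intervalIntegral.norm_integral_le_of_norm_le_const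
        (f := g) (C := C) (a := (0:ℝ)) (b := a) (fun x hx => by
          apply hC
          have hsub : uIoc (0:ℝ) a ⊆ Icc 0 L := by
            rw [uIoc_of_le hε.le]
            exact (Ioc_subset_Icc_self).trans (Icc_subset_Icc le_rfl haI.2)
          exact hsub hx)
      simpa [hadef, Real.norm_eq_abs, abs_of_pos hε, abs_of_pos (show (0:ℝ) < ε from hε)] using h
    have hb2 : |∫ t in b..L, g t| ≤ C * ε := by
      have h := intervalIntegral.norm_integral_le_of_norm_le_const
        (f := g) (C := C) (a := b) (b := L) (fun x hx => by
          apply hC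
          have hsub : uIoc b L ⊆ Icc 0 L := by
            rw [uIoc_of_le hbI.2]
            exact (Ioc_subset_Icc_self).trans (Icc_subset_Icc hbI.1 le_rfl)
          exact hsub hx)
      have he : |L - b| = ε := by
        simp only [hbdef]
        rw [abs_of_nonneg (by linarith : (0:ℝ) ≤ L - (L - ε))]
        ring
      rw [Real.norm_eq_abs, he] at h
      exact h
    have habs1 := abs_le.1 hb1
    have habs2 := abs_le.1 hb2
    rw [hsplit]
    linarith [hmid, hFa, hFb, habs1.1, habs2.1]
  have h0le : 0 ≤ ∫ t in (0:ℝ)..L, g t := by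
    by_contra hneg
    push_neg at hneg
    set K := ∫ t in (0:ℝ)..L, g t with hK
    set D : ℝ := 2 * M ^ 2 + 2 * C + 1 with hDdef
    have hDpos : 0 < D := by positivity
    set ε := min (L / 4) (-K / D) with hεdef
    have hε : 0 < ε := lt_min (by linarith) (div_pos (by linarith) hDpos)
    have hε2 : ε < L / 2 := lt_of_le_of_lt (min_le_left _ _) (by linarith)
    have hk := key ε hε hε2
    have h1 : ε ≤ -K / D := min_le_right _ _
    have h2 : ε * D ≤ -K := (le_div_iff₀ hDpos).1 h1
    rw [hDdef] at h2
    linarith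
  have hint1 : IntervalIntegrable (fun t => f' t ^ 2) volume 0 L := by
    apply ContinuousOn.intervalIntegrable
    rw [uIcc_of_le hL.le]; exact hf'c.pow 2
  have hint2 : IntervalIntegrable (fun t => c ^ 2 * f t ^ 2) volume 0 L := by
    apply ContinuousOn.intervalIntegrable
    rw [uIcc_of_le hL.le]; exact continuousOn_const.mul (hfc.pow 2)
  have hsplit2 : ∫ t in (0:ℝ)..L, g t
      = (∫ t in (0:ℝ)..L, f' t ^ 2) - c ^ 2 * ∫ t in (0:ℝ)..L, f t ^ 2 := by
    simp only [hg]
    rw [intervalIntegral.integral_sub hint1 hint2, intervalIntegral.integral_const_mul]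
  have hKB : c ^ 2 * (∫ t in (0:ℝ)..L, f t ^ 2) ≤ ∫ t in (0:ℝ)..L, f' t ^ 2 := by
    rw [hsplit2] at h0le; linarith
  have hcsq : c ^ 2 = π ^ 2 / L ^ 2 := by
    rw [eq_div_iff (by positivity)]
    linear_combination (c * L + π) * hcL
  calc ∫ t in (0:ℝ)..L, f t ^ 2
      = (L ^ 2 / π ^ 2) * (c ^ 2 * ∫ t in (0:ℝ)..L, f t ^ 2) := by
        rw [hcsq]; field_simp
  _ ≤ (L ^ 2 / π ^ 2) * ∫ t in (0:ℝ)..L, f' t ^ 2 :=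
        mul_le_mul_of_nonneg_left hKB (by positivity)
end

section
/- Let $a, c$ satisfy $0 < c \le a < 1$ and $a + c = 10/9$, and set $f_1(t) = \sin(\pi c)\sin(\pi t)$ for $t \in [0,a]$ and $f_2(t) = f_3(t) = \sin(\pi a)\sin(\pi t)$ for $t \in [0,c]$. Then $f_1(a) = f_2(c) = f_3(c)$, $f_1(0) = f_2(0) = f_3(0) = 0$, and $\sum_{i} \int f_i'(t)^2\,dt \le \pi^2 \sum_i \int f_i(t)^2\,dt$, where the integrals are over the respective domains. -/
open Real MeasureTheory intervalIntegral

lemma int_sin (L : ℝ) : ∫ t in (0:ℝ)..L, Real.sin (π*t)^2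
    = (π*L - Real.sin (π*L) * Real.cos (π*L)) / (2*π) := by
  rw [intervalIntegral.integral_comp_mul_left (fun x => Real.sin x ^ 2) Real.pi_ne_zero,
    integral_sin_sq]
  have := Real.pi_ne_zero
  field_simp
  rw [smul_eq_mul]; simp only [mul_zero, Real.sin_zero, zero_mul]; linear_combination (π * L - Real.sin (π * L) * Real.cos (π * L)) * mul_inv_cancel₀ this

lemma int_cos (L : ℝ) : ∫ t in (0:ℝ)..L, Real.cos (π*t)^2
    = (π*L + Real.sin (π*L) * Real.cos (π*L)) / (2*π) := by
  rw [intervalIntegral.integral_comp_mul_left (fun x => Real.cos x ^ 2) Real.pi_ne_zero,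
    integral_cos_sq]
  have := Real.pi_ne_zero
  field_simp
  rw [smul_eq_mul]; simp only [mul_zero, Real.sin_zero, zero_mul]; linear_combination (π * L + Real.sin (π * L) * Real.cos (π * L)) * mul_inv_cancel₀ this

lemma sin_key : 1 < 3 * Real.sin (π/9) := by
  have h1 : (0:ℝ) < π/9 := by positivity
  have h2 : π/9 ≤ 1 := by nlinarith [Real.pi_lt_d2]
  have := Real.sin_gt_sub_cube h1
  have hub := Real.pi_lt_d2
  have hlb := Real.pi_gt_d6
  have h3 : π^3 < 32 := by nlinarith [sq_nonneg π, sq_nonneg (π-3.15)]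
  nlinarith [Real.pi_gt_d6]

lemma hd (K t : ℝ) : HasDerivAt (fun t => K * Real.sin (π * t))
    (K * (π * Real.cos (π * t))) t := by
  have h1 : HasDerivAt (fun t : ℝ => π * t) π t := by
    simpa using (hasDerivAt_id t).const_mul π
  have := h1.sin.const_mul K
  exact this.congr_deriv (by ring)

lemma intD (K L : ℝ) : ∫ t in (0:ℝ)..L, (K*(π*Real.cos (π*t)))^2
    = K^2*π^2 * ((π*L + Real.sin (π*L) * Real.cos (π*L))/(2*π)) := by
  have h : ∀ t : ℝ, (K*(π*Real.cos (π*t)))^2 = (K^2*π^2) * Real.cos (π*t)^2 := by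
    intro t; ring
  simp_rw [h]
  rw [intervalIntegral.integral_const_mul, int_cos]

lemma intF (K L : ℝ) : ∫ t in (0:ℝ)..L, (K*Real.sin (π*t))^2
    = K^2 * ((π*L - Real.sin (π*L) * Real.cos (π*L))/(2*π)) := by
  have h : ∀ t : ℝ, (K*Real.sin (π*t))^2 = K^2 * Real.sin (π*t)^2 := by
    intro t; ring
  simp_rw [h]
  rw [intervalIntegral.integral_const_mul, int_sin]

theorem stmt_11 (a c : ℝ) (hc : 0 < c) (hca : c ≤ a) (ha : a < 1)
    (hsum : a + c = 10 / 9) (f₁ f₂ f₃ : ℝ → ℝ)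
    (hf₁ : f₁ = fun t => sin (π * c) * sin (π * t))
    (hf₂ : f₂ = fun t => sin (π * a) * sin (π * t))
    (hf₃ : f₃ = fun t => sin (π * a) * sin (π * t)) :
    f₁ a = f₂ c ∧ f₂ c = f₃ c ∧ f₁ 0 = 0 ∧ f₂ 0 = 0 ∧ f₃ 0 = 0 ∧
      (∫ t in (0:ℝ)..a, (deriv f₁ t) ^ 2) + (∫ t in (0:ℝ)..c, (deriv f₂ t) ^ 2) +
          (∫ t in (0:ℝ)..c, (deriv f₃ t) ^ 2) ≤
        π ^ 2 * ((∫ t in (0:ℝ)..a, (f₁ t) ^ 2) + (∫ t in (0:ℝ)..c, (f₂ t) ^ 2) +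
          (∫ t in (0:ℝ)..c, (f₃ t) ^ 2)) := by
  subst hf₁ hf₂ hf₃
  refine ⟨by simp [mul_comm], rfl, by simp, by simp, by simp, ?_⟩
  have hder : ∀ K : ℝ, deriv (fun t : ℝ => Real.sin (π * K) * Real.sin (π * t))
      = fun t => Real.sin (π * K) * (π * Real.cos (π * t)) :=
    fun K => funext fun t => (hd (Real.sin (π * K)) t).deriv
  rw [hder, hder]
  beta_reduce
  rw [intD, intD, intF, intF]
  set sa := Real.sin (π * a) with hsa
  set sc := Real.sin (π * c) with hsc
  set ca := Real.cos (π * a) with hca'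
  set cc := Real.cos (π * c) with hcc
  have hπ := Real.pi_pos
  have hsapos : 0 < sa := Real.sin_pos_of_pos_of_lt_pi (by nlinarith)
    (by nlinarith)
  have hscpos : 0 < sc := Real.sin_pos_of_pos_of_lt_pi (by nlinarith)
    (by nlinarith)
  have key : sc * ca + 2 * (sa * cc) ≤ 0 := by
    have hadd : Real.sin (π * a + π * c) = sa * cc + ca * sc := Real.sin_add _ _
    have hsub : Real.sin (π * a - π * c) = sa * cc - ca * sc := Real.sin_sub _ _
    have hac : π * a + π * c = π + π / 9 := by rw [← mul_add, hsum]; ring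
    have hval : Real.sin (π * a + π * c) = - Real.sin (π / 9) := by
      rw [hac, Real.sin_add]; simp
    have hle : Real.sin (π * a - π * c) ≤ 1 := Real.sin_le_one _
    have := sin_key
    linarith
  have h0 : π * (sa * sc * (sc * ca + 2 * (sa * cc))) ≤ 0 :=
    mul_nonpos_of_nonneg_of_nonpos hπ.le
      (mul_nonpos_of_nonneg_of_nonpos (by positivity) key)
  have hexp : sc^2*π^2 * ((π*a + sa*ca)/(2*π)) + sa^2*π^2 * ((π*c + sc*cc)/(2*π))
      + sa^2*π^2 * ((π*c + sc*cc)/(2*π))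
      - π^2 * (sc^2 * ((π*a - sa*ca)/(2*π)) + sa^2 * ((π*c - sc*cc)/(2*π))
        + sa^2 * ((π*c - sc*cc)/(2*π)))
      = π * (sa * sc * (sc * ca + 2 * (sa * cc))) := by
    field_simp
    ring
  linarith
end

section
/- Let $a_1 \ge a_2 \ge a_3 > 0$ with $a_1 < 1$, $a_1 + a_3 = 10/9$, and $a_2 = a_3$. Define $S = \sin(\pi a_3)\cos(\pi a_1) + 2\sin(\pi a_1)\cos(\pi a_3)$. Then $S < 0$ and consequently $\sin(\pi a_3)\sin(\pi a_1) \cdot \pi S \le 0$, i.e., the boundary term in the integration by parts $\int (f')^2 = \pi^2 \int f^2 + [\text{boundary}]$ for the star test function is nonpositive. -/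
open Real

theorem stmt_19 (a₁ a₂ a₃ : ℝ) (h32 : 0 < a₃) (h23 : a₃ ≤ a₂) (h12 : a₂ ≤ a₁)
    (ha1 : a₁ < 1) (hsum : a₁ + a₃ = 10 / 9) (heq : a₂ = a₃)
    (S : ℝ) (hS : S = sin (π * a₃) * cos (π * a₁) + 2 * sin (π * a₁) * cos (π * a₃)) :
    S < 0 ∧ sin (π * a₃) * sin (π * a₁) * (π * S) ≤ 0 := by
  have hpi_gt : (3.141592 : ℝ) < π := pi_gt_d6
  have hpi_lt : π < 3.15 := by
    have := pi_lt_d2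
    linarith
  -- sin (π/9) > 1/3
  have h9pos : (0:ℝ) < π / 9 := by positivity
  have h9le : π / 9 ≤ 1 := by linarith
  have hcube := Real.sin_gt_sub_cube h9pos
  have hsin9 : (1:ℝ)/3 < sin (π / 9) := by
    nlinarith [sq_nonneg (π/9), sq_nonneg (π - 3.141592)]
  -- key identity
  have key : 2 * S = 3 * sin (π * (a₁ + a₃)) + sin (π * (a₁ - a₃)) := by
    rw [hS, show π * (a₁ + a₃) = π * a₁ + π * a₃ by ring,
      show π * (a₁ - a₃) = π * a₁ - π * a₃ by ring, sin_add, sin_sub]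
    ring
  have hsum' : π * (a₁ + a₃) = π + π / 9 := by rw [hsum]; ring
  have hval : sin (π * (a₁ + a₃)) = - sin (π / 9) := by
    rw [hsum', sin_add, Real.sin_pi, Real.cos_pi]; ring
  have hle : sin (π * (a₁ - a₃)) ≤ 1 := sin_le_one _
  have hSneg : S < 0 := by
    rw [hval] at key
    linarith
  refine ⟨hSneg, ?_⟩
  have ha3 : a₃ < 1 := by linarith
  have ha1pos : 0 < a₁ := by linarith
  have hs3 : 0 < sin (π * a₃) := by
    apply Real.sin_pos_of_pos_of_lt_pi
    · positivity
    · nlinarith [pi_pos]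
  have hs1 : 0 < sin (π * a₁) := by
    apply Real.sin_pos_of_pos_of_lt_pi
    · positivity
    · nlinarith [pi_pos]
  exact le_of_lt (mul_neg_of_pos_of_neg (mul_pos hs3 hs1)
    (mul_neg_of_pos_of_neg pi_pos hSneg))
end
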